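/- arXiv:1201.4945 — 2 statements merged into one kernel-verified Lean document; each statement's English description precedes it below -/
import Mathlib

section
/- Fix m > 0. For every pair of parameter tuples g = (b, a, v, R) and g' = (b', a', v', R') (with b, b' ∈ ℝ, a, a', v, v' ∈ EuclideanSpace ℝ (Fin 3), R, R' ∈ SO(3)), there exist a complex number c with |c| = 1 and a parameter tuple g'' = (b'', a'', v'', R''), both independent of u, such that for every u ∈ ℝ one has D_u(g') ∘ D_u(g) = c • D_u(g'') as operators on L²(EuclideanSpace ℝ (Fin 3), ℂ); moreover one can take b'' = b + b', v'' = v' + R'v and R'' = R'R. In other words, the family g ↦ D_u(g) is a ray representation whose multiplier c is the same for every value of the internal energy u. -/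
open MeasureTheory Matrix

noncomputable section

/-- Momentum space `ℝ³`. -/
abbrev E3 : Type := EuclideanSpace ℝ (Fin 3)

/-- The Hilbert space `H = L²(ℝ³, ℂ)` with Lebesgue measure. -/
abbrev Hsp : Type := Lp ℂ 2 (volume : Measure E3)

/-- Action of a `3 × 3` real matrix on `ℝ³` by matrix–vector multiplication. -/
def act (R : Matrix (Fin 3) (Fin 3) ℝ) (x : E3) : E3 :=
  (EuclideanSpace.equiv (Fin 3) ℝ).symm (R.mulVec (EuclideanSpace.equiv (Fin 3) ℝ x))

/-- The pointwise formula for the Galilei operator `D_u(b, a, v, R)` of mass `m`: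
`(D_u(g)ψ)(p) = exp(i(u·b + (‖p‖²/(2m))·b + ⟪p, a⟫)) · ψ(R⁻¹(p − m·v))`. -/
def Dop (m u b : ℝ) (a v : E3) (R : Matrix (Fin 3) (Fin 3) ℝ) (ψ : E3 → ℂ) : E3 → ℂ :=
  fun p => Complex.exp (Complex.I * ((u * b + (‖p‖ ^ 2 / (2 * m)) * b + inner ℝ p a : ℝ) : ℂ)) *
    ψ (act R⁻¹ (p - m • v))

lemma inner_eq_dot (x y : E3) :
    (inner ℝ x y : ℝ) = dotProduct ((EuclideanSpace.equiv (Fin 3) ℝ) x)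
      ((EuclideanSpace.equiv (Fin 3) ℝ) y) := by
  simp [PiLp.inner_apply, dotProduct, RCLike.inner_apply, mul_comm]

lemma act_mul (A B : Matrix (Fin 3) (Fin 3) ℝ) (x : E3) :
    act A (act B x) = act (A * B) x := by
  simp only [act, ContinuousLinearEquiv.apply_symm_apply, Matrix.mulVec_mulVec]

lemma act_one (x : E3) : act 1 x = x := by simp [act]

lemma act_sub (A : Matrix (Fin 3) (Fin 3) ℝ) (x y : E3) :
    act A (x - y) = act A x - act A y := by
  simp [act, Matrix.mulVec_sub, map_sub]

lemma act_smul (A : Matrix (Fin 3) (Fin 3) ℝ) (c : ℝ) (x : E3) :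
    act A (c • x) = c • act A x := by
  simp [act, Matrix.mulVec_smul, _root_.map_smul]

lemma inner_act_transpose (A : Matrix (Fin 3) (Fin 3) ℝ) (x y : E3) :
    (inner ℝ (act Aᵀ x) y : ℝ) = inner ℝ x (act A y) := by
  rw [inner_eq_dot, inner_eq_dot]
  simp only [act, ContinuousLinearEquiv.apply_symm_apply]
  rw [dotProduct_comm, dotProduct_mulVec, Matrix.vecMul_transpose,
    dotProduct_comm]

lemma norm_act_transpose (A : Matrix (Fin 3) (Fin 3) ℝ) (hA : A * Aᵀ = 1) (x : E3) :
    ‖act Aᵀ x‖ ^ 2 = ‖x‖ ^ 2 := by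
  rw [← real_inner_self_eq_norm_sq, ← real_inner_self_eq_norm_sq,
    inner_act_transpose, act_mul, hA, act_one]

/-- For `m > 0` and any two parameter tuples `g = (b, a, v, R)` and
`g' = (b', a', v', R')` with `R, R' ∈ SO(3)`, there exist a unimodular constant `c ∈ ℂ` and a
parameter tuple `g'' = (b'', a'', v'', R'')`, both independent of `u`, with `b'' = b + b'`,
`v'' = v' + R'v`, `R'' = R'R`, such that for every internal energy `u`,
`D_u(g') ∘ D_u(g) = c • D_u(g'')`: the family `g ↦ D_u(g)` is a ray representation whose
multiplier `c` is the same for every `u`. -/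
theorem statement11
    (m : ℝ) (hm : 0 < m) (b b' : ℝ) (a v a' v' : E3)
    (R R' : Matrix (Fin 3) (Fin 3) ℝ)
    (hR : R ∈ Matrix.specialOrthogonalGroup (Fin 3) ℝ)
    (hR' : R' ∈ Matrix.specialOrthogonalGroup (Fin 3) ℝ) :
    ∃ c : ℂ, ‖c‖ = 1 ∧ ∃ a'' : E3,
      ∀ u : ℝ, ∀ ψ : E3 → ℂ,
        Dop m u b' a' v' R' (Dop m u b a v R ψ) =
          fun p => c * Dop m u (b + b') a'' (v' + act R' v) (R' * R) ψ p := by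
  -- orthogonality facts
  have hRo := (Matrix.mem_specialOrthogonalGroup_iff.mp hR).1
  have hR'o := (Matrix.mem_specialOrthogonalGroup_iff.mp hR').1
  have hstarR : star R = Rᵀ := by ext i j; simp [Matrix.conjTranspose_apply]
  have hstarR' : star R' = R'ᵀ := by ext i j; simp [Matrix.conjTranspose_apply]
  have h1 : R * Rᵀ = 1 := by rw [← hstarR]; exact (Matrix.mem_orthogonalGroup_iff (Fin 3) ℝ).mp hRo
  have h1' : R' * R'ᵀ = 1 := by rw [← hstarR']; exact (Matrix.mem_orthogonalGroup_iff (Fin 3) ℝ).mp hR'o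
  have h2 : Rᵀ * R = 1 := by rw [← hstarR]; exact (Matrix.mem_orthogonalGroup_iff' (Fin 3) ℝ).mp hRo
  have h2' : R'ᵀ * R' = 1 := by rw [← hstarR']; exact (Matrix.mem_orthogonalGroup_iff' (Fin 3) ℝ).mp hR'o
  have hinvR : R⁻¹ = Rᵀ := Matrix.inv_eq_right_inv h1
  have hinvR' : R'⁻¹ = R'ᵀ := Matrix.inv_eq_right_inv h1'
  have hinvRR' : (R' * R)⁻¹ = Rᵀ * R'ᵀ := by
    apply Matrix.inv_eq_right_inv
    rw [Matrix.mul_assoc, ← Matrix.mul_assoc R Rᵀ, h1, Matrix.one_mul, h1']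
  set k : ℝ := m * b * ‖v'‖ ^ 2 / 2 - m * inner ℝ v' (act R' a) with hk
  refine ⟨Complex.exp (Complex.I * (k : ℂ)), ?_, a' + act R' a - b • v', ?_⟩
  · rw [Complex.norm_exp]
    simp
  intro u ψ
  funext p
  simp only [Dop, hinvR, hinvR', hinvRR']
  -- the arguments of ψ agree
  have harg : act Rᵀ (act R'ᵀ (p - m • v') - m • v) =
      act (Rᵀ * R'ᵀ) (p - m • (v' + act R' v)) := by
    have : (m : ℝ) • v = act R'ᵀ (m • act R' v) := by
      rw [act_smul, act_mul, h2', act_one]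
    rw [this, ← act_sub, act_mul]
    rw [smul_add]
    abel_nf
  rw [harg]
  -- the phases agree
  set q : E3 := act R'ᵀ (p - m • v') with hq
  have hqnorm : ‖q‖ ^ 2 = ‖p‖ ^ 2 - 2 * (m * inner ℝ p v') + m ^ 2 * ‖v'‖ ^ 2 := by
    rw [hq, norm_act_transpose R' h1' (p - m • v'), @norm_sub_sq_real,
      real_inner_smul_right, norm_smul]
    rw [Real.norm_eq_abs, mul_pow, sq_abs]
  have hqa : (inner ℝ q a : ℝ) = inner ℝ p (act R' a) - m * inner ℝ v' (act R' a) := by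
    rw [hq, inner_act_transpose, inner_sub_left, real_inner_smul_left]
  have ha'' : (inner ℝ p (a' + act R' a - b • v') : ℝ) =
      inner ℝ p a' + inner ℝ p (act R' a) - b * inner ℝ p v' := by
    rw [inner_sub_right, inner_add_right, real_inner_smul_right]
  have hphase : (u * b' + ‖p‖ ^ 2 / (2 * m) * b' + inner ℝ p a') +
      (u * b + ‖q‖ ^ 2 / (2 * m) * b + inner ℝ q a) =
      k +
      (u * (b + b') + ‖p‖ ^ 2 / (2 * m) * (b + b') +
        inner ℝ p (a' + act R' a - b • v')) := by
    rw [hqnorm, hqa, ha'', hk]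
    field_simp
    ring
  rw [← mul_assoc, ← mul_assoc, ← Complex.exp_add, ← Complex.exp_add,
    ← mul_add, ← mul_add, ← Complex.ofReal_add, ← Complex.ofReal_add, hphase]
end
end

section
/- Fix m > 0 and let u, u' ∈ ℝ with u ≠ u'. Let H = L²(EuclideanSpace ℝ (Fin 3), ℂ). Then the families g ↦ D_u(g) ⊕ D_{u'}(g) and g ↦ D_0(g) ⊕ D_0(g) of unitary operators on H ⊕ H are NOT projectively equivalent: there exist no unitary operator U : H ⊕ H → H ⊕ H and no continuous function φ from the parameter space ℝ × EuclideanSpace ℝ (Fin 3) × EuclideanSpace ℝ (Fin 3) × SO(3) to ℂ with |φ(g)| = 1 for all g, such that U ∘ (D_u(g) ⊕ D_{u'}(g)) ∘ U⁻¹ = φ(g) • (D_0(g) ⊕ D_0(g)) for every parameter tuple g = (b, a, v, R). -/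
open MeasureTheory

noncomputable section

/-- The Hilbert-space direct sum `H ⊕ H`. -/
abbrev HH : Type := WithLp 2 (Hsp × Hsp)

/-- The direct sum `A ⊕ B` of two operators on `H`, acting componentwise on `H ⊕ H`. -/
def dsum (A B : Hsp →L[ℂ] Hsp) (ψ : HH) : HH :=
  (WithLp.equiv 2 (Hsp × Hsp)).symm
    (A ((WithLp.equiv 2 (Hsp × Hsp)) ψ).1, B ((WithLp.equiv 2 (Hsp × Hsp)) ψ).2)

/-- `S` realizes the Galilei operator `D_u(b,a,v,R)` of mass `m` on `L²(ℝ³, ℂ)`. -/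
def Represents (m u b : ℝ) (a v : E3) (R : Matrix (Fin 3) (Fin 3) ℝ)
    (S : Hsp →L[ℂ] Hsp) : Prop :=
  ∀ ψ : Hsp, ⇑(S ψ) =ᵐ[volume] Dop m u b a v R ⇑ψ

/-- The Galilei parameter space `ℝ × ℝ³ × ℝ³ × SO(3)` (product topology). -/
abbrev GalileiParam : Type :=
  ℝ × E3 × E3 × ↥(Matrix.specialOrthogonalGroup (Fin 3) ℝ)

/-! ### Auxiliary material -/

open Complex Real
open scoped FourierTransform RealInnerProductSpace ContDiff

set_option maxHeartbeats 1000000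

/-- A smooth compactly supported function as a Schwartz map. -/
def mySchwartzOfCompactSupport {g : E3 → ℂ} (hg : ContDiff ℝ ∞ g)
    (hsupp : HasCompactSupport g) : SchwartzMap E3 ℂ where
  toFun := g
  smooth' := hg
  decay' := by
    intro k n
    have h1 : HasCompactSupport (fun x => ‖x‖ ^ k * ‖iteratedFDeriv ℝ n g x‖) :=
      ((hsupp.iteratedFDeriv n).norm).mul_left
    have h2 : Continuous (fun x : E3 => ‖x‖ ^ k * ‖iteratedFDeriv ℝ n g x‖) :=
      ((continuous_norm.pow k).mul (hg.continuous_iteratedFDeriv (by exact_mod_cast le_top)).norm)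
    obtain ⟨C, hC⟩ := h1.exists_bound_of_continuous h2
    refine ⟨C, fun x => ?_⟩
    have := hC x
    rw [Real.norm_eq_abs] at this
    exact (le_abs_self _).trans this

lemma innerl_flip : (innerₗ E3).flip = innerₗ E3 := by
  ext x y
  simp only [LinearMap.flip_apply]
  exact real_inner_comm x y

/-- Injectivity of the Fourier transform on `L¹(ℝ³)`. -/
lemma fourier_inj {f : E3 → ℂ} (hf : Integrable f)
    (h : ∀ a : E3, ∫ p, Complex.exp (Complex.I * (inner ℝ p a : ℝ)) * f p = 0) :
    ∀ᵐ p : E3, f p = 0 := by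
  have hFT : ∀ w : E3, 𝓕 f w = 0 := by
    intro w
    rw [Real.fourier_eq']
    rw [← h ((-(2 * π)) • w)]
    congr 1 with v
    rw [smul_eq_mul, real_inner_smul_right]
    push_cast
    ring_nf
  have key : ∀ h' : SchwartzMap E3 ℂ, ∫ x, f x * h' x = 0 := by
    intro h'
    set g := (FourierTransform.fourierCLE ℂ (SchwartzMap E3 ℂ)).symm h' with hgdef
    have hg : 𝓕 ⇑g = ⇑h' := by
      rw [← SchwartzMap.fourier_coe, ← FourierTransform.fourierCLE_apply (R := ℂ) g, hgdef,
        ContinuousLinearEquiv.apply_symm_apply]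
    have flip := VectorFourier.integral_fourierIntegral_smul_eq_flip (L := innerₗ E3)
      (e := Real.fourierChar) (μ := (volume : Measure E3)) (ν := (volume : Measure E3))
      Real.continuous_fourierChar (by exact continuous_inner) hf g.integrable
    rw [innerl_flip] at flip
    have lhs0 : ∫ ξ : E3, (VectorFourier.fourierIntegral 𝐞 volume (innerₗ E3) f ξ) • (g ξ) = 0 := by
      have : ∀ ξ : E3, (VectorFourier.fourierIntegral 𝐞 volume (innerₗ E3) f ξ) = 0 := hFT
      simp [this]
    rw [lhs0] at flip
    have : ∫ x, f x • (VectorFourier.fourierIntegral 𝐞 volume (innerₗ E3) (⇑g) x)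
        = ∫ x, f x * h' x := by
      congr 1 with x
      rw [smul_eq_mul]
      congr 1
      exact congrFun hg x
    rw [this] at flip
    exact flip.symm
  have := ae_eq_zero_of_integral_contDiff_smul_eq_zero hf.locallyIntegrable ?_
  · exact this
  intro g hgsm hgsupp
  have hC : ContDiff ℝ ∞ (fun x => (g x : ℂ)) :=
    Complex.ofRealCLM.contDiff.comp (by exact_mod_cast hgsm)
  have hS : HasCompactSupport (fun x => (g x : ℂ)) :=
    hgsupp.comp_left (g := Complex.ofReal) Complex.ofReal_zero
  rw [← key (mySchwartzOfCompactSupport hC hS)]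
  apply integral_congr_ae
  filter_upwards with x
  show g x • f x = f x * _
  rw [Complex.real_smul, mul_comm]
  rfl

/-! ### Multiplication operators on `L²` -/

lemma memLp_mul_unimod {w : E3 → ℂ} (hw : Continuous w) (hb : ∀ p, ‖w p‖ = 1) (ψ : Hsp) :
    MemLp (fun p => w p * ψ p) 2 (volume : Measure E3) :=
  MemLp.of_le (Lp.memLp ψ) (hw.aestronglyMeasurable.mul (Lp.aestronglyMeasurable ψ))
    (Filter.Eventually.of_forall fun p => by rw [norm_mul, hb p, one_mul])

/-- Multiplication by a unimodular continuous function, as an operator on `L²`. -/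
def mulOp {w : E3 → ℂ} (hw : Continuous w) (hb : ∀ p, ‖w p‖ = 1) : Hsp →L[ℂ] Hsp :=
  LinearMap.mkContinuous
    { toFun := fun ψ => (memLp_mul_unimod hw hb ψ).toLp _
      map_add' := fun ψ₁ ψ₂ => by
        rw [← MemLp.toLp_add (memLp_mul_unimod hw hb ψ₁) (memLp_mul_unimod hw hb ψ₂)]
        apply MemLp.toLp_congr
        filter_upwards [Lp.coeFn_add ψ₁ ψ₂] with p hp
        simp only [hp, Pi.add_apply, mul_add]
      map_smul' := fun c ψ => by
        simp only [RingHom.id_apply]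
        rw [← MemLp.toLp_const_smul c (memLp_mul_unimod hw hb ψ)]
        apply MemLp.toLp_congr
        filter_upwards [Lp.coeFn_smul c ψ] with p hp
        simp only [hp, Pi.smul_apply, smul_eq_mul]
        ring }
    1 (fun ψ => by
        simp only [LinearMap.coe_mk, AddHom.coe_mk, one_mul]
        rw [Lp.norm_toLp, Lp.norm_def]
        have : eLpNorm (fun p => w p * ψ p) 2 (volume : Measure E3) = eLpNorm (⇑ψ) 2 volume :=
          eLpNorm_congr_norm_ae (Filter.Eventually.of_forall fun p => by
            rw [norm_mul, hb p, one_mul])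
        rw [this])

lemma mulOp_coeFn {w : E3 → ℂ} (hw : Continuous w) (hb : ∀ p, ‖w p‖ = 1) (ψ : Hsp) :
    ⇑(mulOp hw hb ψ) =ᵐ[volume] fun p => w p * ψ p :=
  MemLp.coeFn_toLp (memLp_mul_unimod hw hb ψ)

/-! ### The phase functions and the concrete Galilei operators -/

/-- The phase function for `D_u(b, a, 0, 1)`. -/
def wFun (m u b : ℝ) (a : E3) : E3 → ℂ := fun p =>
  Complex.exp (Complex.I * ((u * b + (‖p‖ ^ 2 / (2 * m)) * b + inner ℝ p a : ℝ) : ℂ))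

lemma wFun_continuous (m u b : ℝ) (a : E3) : Continuous (wFun m u b a) := by
  have h : Continuous (fun p : E3 => (u * b + (‖p‖ ^ 2 / (2 * m)) * b + inner ℝ p a : ℝ)) :=
    (continuous_const.add (((continuous_norm.pow 2).div_const _).mul continuous_const)).add
      (continuous_id.inner continuous_const)
  exact Complex.continuous_exp.comp (continuous_const.mul (Complex.continuous_ofReal.comp h))

lemma wFun_norm (m u b : ℝ) (a : E3) : ∀ p, ‖wFun m u b a p‖ = 1 := by
  intro p
  rw [wFun, Complex.norm_exp,
    show (Complex.I * ((u * b + (‖p‖ ^ 2 / (2 * m)) * b + inner ℝ p a : ℝ) : ℂ)).re = 0 by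
      rw [Complex.mul_re, Complex.I_re, Complex.I_im, Complex.ofReal_re, Complex.ofReal_im]; ring]
  exact Real.exp_zero

lemma wFun_ne_zero (m u b : ℝ) (a : E3) (p : E3) : wFun m u b a p ≠ 0 :=
  Complex.exp_ne_zero _

lemma Dop_eq_wFun (m u b : ℝ) (a : E3) (f : E3 → ℂ) :
    Dop m u b a 0 ((1 : Matrix.specialOrthogonalGroup (Fin 3) ℝ) : Matrix (Fin 3) (Fin 3) ℝ) f
      = fun p => wFun m u b a p * f p := by
  funext p
  rw [Dop, wFun]
  congr 1
  rw [OneMemClass.coe_one, inv_one, smul_zero, sub_zero, act]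
  simp [Matrix.one_mulVec]

/-- The Galilei operator `D_u(b, a, 0, 1)` as an operator on `L²`. -/
def DopOp (m u b : ℝ) (a : E3) : Hsp →L[ℂ] Hsp :=
  mulOp (wFun_continuous m u b a) (wFun_norm m u b a)

lemma DopOp_represents (m u b : ℝ) (a : E3) :
    Represents m u b a 0
      ((1 : Matrix.specialOrthogonalGroup (Fin 3) ℝ) : Matrix (Fin 3) (Fin 3) ℝ)
      (DopOp m u b a) := by
  intro ψ
  rw [Dop_eq_wFun]
  exact mulOp_coeFn _ _ ψ

/-! ### Gaussian test vector -/

/-- The Gaussian `p ↦ exp (-‖p‖²)` (complex valued). -/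
def gaussF : E3 → ℂ := fun p => ((Real.exp (-‖p‖ ^ 2) : ℝ) : ℂ)

lemma gaussF_memLp : MemLp gaussF 2 (volume : Measure E3) := by
  have hmeas : AEStronglyMeasurable gaussF (volume : Measure E3) :=
    (Complex.continuous_ofReal.comp
      (Real.continuous_exp.comp (continuous_norm.pow 2).neg)).aestronglyMeasurable
  rw [memLp_two_iff_integrable_sq_norm hmeas]
  have h2 : (0 : ℝ) < ((2 : ℂ)).re := by norm_num
  have hint := (GaussianFourier.integrable_cexp_neg_mul_sq_norm_add (V := E3) h2 0 0).norm
  apply hint.congr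
  filter_upwards with p
  have l : ‖cexp (-2 * ((‖p‖ : ℝ) : ℂ) ^ 2 + 0 * ((inner ℝ (0 : E3) p : ℝ) : ℂ))‖
      = rexp (-2 * ‖p‖ ^ 2) := by
    rw [Complex.norm_exp]
    congr 1
    simp [← Complex.ofReal_pow]
  have r1 : ‖gaussF p‖ ^ 2 = rexp (-2 * ‖p‖ ^ 2) := by
    rw [show gaussF p = ((Real.exp (-‖p‖ ^ 2) : ℝ) : ℂ) from rfl, Complex.norm_real,
      Real.norm_eq_abs, Real.abs_exp, sq, ← Real.exp_add]
    ring_nf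
  rw [r1, ← l]

/-- The L² Gaussian vector. -/
def xg : Hsp := MemLp.toLp gaussF gaussF_memLp

lemma xg_coe : ⇑xg =ᵐ[volume] gaussF := MemLp.coeFn_toLp gaussF_memLp

lemma xg_ne_zero : xg ≠ 0 := by
  intro hx
  have h0 : ⇑xg =ᵐ[volume] 0 := Lp.eq_zero_iff_ae_eq_zero.mp hx
  have hae : ∀ᵐ p : E3 ∂volume, gaussF p = 0 := by
    filter_upwards [(xg_coe.symm).trans h0] with p hp using hp
  have hvol := ae_iff.mp hae
  have hne : {a : E3 | ¬gaussF a = 0} = Set.univ := by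
    ext p
    simp [gaussF, Real.exp_ne_zero]
  rw [hne] at hvol
  exact (NeZero.ne (volume : Measure E3)) (Measure.measure_univ_eq_zero.mp hvol)
/-! ### Transform computations -/

/-- The phase `exp(iub)`. -/
def ph (u b : ℝ) : ℂ := Complex.exp (Complex.I * ((u * b : ℝ) : ℂ))

lemma ph_ne_zero (u b : ℝ) : ph u b ≠ 0 := Complex.exp_ne_zero _

lemma wFun_split (m u b : ℝ) (a : E3) (p : E3) :
    wFun m u b a p = ph u b * wFun m 0 b a p := by
  rw [wFun, wFun, ph, ← Complex.exp_add]
  congr 1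
  push_cast
  ring

lemma wFun_add_a (m b : ℝ) (a : E3) (p : E3) :
    wFun m 0 b a p = Complex.exp (Complex.I * ((inner ℝ p a : ℝ) : ℂ)) * wFun m 0 b 0 p := by
  rw [wFun, wFun, ← Complex.exp_add]
  congr 1
  rw [inner_zero_right]
  push_cast
  ring

/-- The Fourier–Gauss integral. -/
def Tgauss (m b : ℝ) (a : E3) : ℂ :=
  ∫ p : E3, wFun m 0 b a p * ((Real.exp (-(2 : ℝ) * ‖p‖ ^ 2) : ℝ) : ℂ)

lemma Tgauss_ne_zero (m b : ℝ) (a : E3) : Tgauss m b a ≠ 0 := by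
  set B : ℂ := 2 - Complex.I * ((b / (2 * m) : ℝ) : ℂ) with hBdef
  have hBre : B.re = 2 := by
    rw [hBdef]
    simp only [Complex.sub_re, Complex.mul_re, Complex.I_re, Complex.I_im, Complex.ofReal_re,
      Complex.ofReal_im, Complex.re_ofNat]
    ring
  have hB : 0 < B.re := by rw [hBre]; norm_num
  have hB0 : B ≠ 0 := fun h => by rw [h] at hBre; simp at hBre
  have hval := GaussianFourier.integral_cexp_neg_mul_sq_norm_add (V := E3) hB Complex.I a
  have heq : Tgauss m b a
      = ∫ p : E3, cexp (-B * ((‖p‖ : ℝ) : ℂ) ^ 2 + Complex.I * ((inner ℝ a p : ℝ) : ℂ)) := by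
    rw [Tgauss]
    apply integral_congr_ae
    filter_upwards with p
    rw [wFun, Complex.ofReal_exp, ← Complex.exp_add]
    congr 1
    rw [hBdef, real_inner_comm a p]
    push_cast
    ring
  rw [heq, hval]
  apply mul_ne_zero
  · rw [Ne, Complex.cpow_eq_zero_iff]
    rintro ⟨h1, -⟩
    rcases div_eq_zero_iff.mp h1 with h | h
    · exact Real.pi_ne_zero (by exact_mod_cast h)
    · exact hB0 h
  · exact Complex.exp_ne_zero _

lemma DopOp_coeFn (m u b : ℝ) (a : E3) (ψ : Hsp) :
    ⇑(DopOp m u b a ψ) =ᵐ[volume] fun p => wFun m u b a p * ψ p :=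
  mulOp_coeFn _ _ ψ

lemma inner_DopOp_xg (m u b : ℝ) (a : E3) :
    (inner ℂ xg (DopOp m u b a xg) : ℂ) = ph u b * Tgauss m b a := by
  rw [L2.inner_def]
  have hcong : ∀ᵐ p : E3 ∂volume,
      (inner ℂ (xg p) ((DopOp m u b a xg) p) : ℂ)
        = ph u b * (wFun m 0 b a p * ((Real.exp (-(2 : ℝ) * ‖p‖ ^ 2) : ℝ) : ℂ)) := by
    filter_upwards [xg_coe, DopOp_coeFn m u b a xg] with p h1 h2
    rw [RCLike.inner_apply, h2, h1, wFun_split m u b a p,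
      show gaussF p = ((rexp (-‖p‖ ^ 2) : ℝ) : ℂ) from rfl, Complex.conj_ofReal,
      show rexp (-(2 : ℝ) * ‖p‖ ^ 2) = rexp (-‖p‖ ^ 2) * rexp (-‖p‖ ^ 2) by
        rw [← Real.exp_add]; ring_nf]
    push_cast
    ring
  rw [integral_congr_ae hcong, integral_const_mul]
  rfl

lemma inner_DopOp0 (m b : ℝ) (a : E3) (y : Hsp) :
    (inner ℂ y (DopOp m 0 b a y) : ℂ)
      = ∫ p : E3, wFun m 0 b a p * ((‖y p‖ ^ 2 : ℝ) : ℂ) := by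
  rw [L2.inner_def]
  apply integral_congr_ae
  filter_upwards [DopOp_coeFn m 0 b a y] with p h2
  rw [RCLike.inner_apply, h2]
  have : wFun m 0 b a p * y p * (starRingEnd ℂ) (y p)
      = wFun m 0 b a p * ((starRingEnd ℂ) (y p) * y p) := by ring
  rw [this, ← Complex.normSq_eq_conj_mul_self]
  congr 1
  rw [Complex.sq_norm]

lemma integ_sq (y : Hsp) : Integrable (fun p : E3 => (‖y p‖ ^ 2 : ℝ)) volume :=
  (memLp_two_iff_integrable_sq_norm (Lp.aestronglyMeasurable y)).mp (Lp.memLp y)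

lemma integ_w (m b : ℝ) (a : E3) {ρ : E3 → ℝ} (hρ : Integrable ρ volume) :
    Integrable (fun p : E3 => wFun m 0 b a p * ((ρ p : ℝ) : ℂ)) volume :=
  Integrable.bdd_mul hρ.ofReal (wFun_continuous m 0 b a).aestronglyMeasurable
    (c := 1) (Filter.Eventually.of_forall fun p => le_of_eq (wFun_norm m 0 b a p))

/-! ### Direct-sum inner product computations -/

lemma inner_dsum_eq (A B : Hsp →L[ℂ] Hsp) (Ψ : HH) :
    (inner ℂ Ψ (dsum A B Ψ) : ℂ)
      = inner ℂ (((WithLp.equiv 2 (Hsp × Hsp)) Ψ).1) (A (((WithLp.equiv 2 (Hsp × Hsp)) Ψ).1))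
        + inner ℂ (((WithLp.equiv 2 (Hsp × Hsp)) Ψ).2) (B (((WithLp.equiv 2 (Hsp × Hsp)) Ψ).2)) := by
  rw [WithLp.prod_inner_apply]
  rfl

/-! ### Main theorem -/

/-- For `m > 0` and `u ≠ u'`, the families `g ↦ D_u(g) ⊕ D_{u'}(g)` and
`g ↦ D_0(g) ⊕ D_0(g)` of unitary operators on `H ⊕ H` are NOT projectively equivalent:
there is no unitary `U : H ⊕ H → H ⊕ H` and no continuous unimodular function `φ` on the
parameter space with `U ∘ (D_u(g) ⊕ D_{u'}(g)) ∘ U⁻¹ = φ(g) • (D_0(g) ⊕ D_0(g))` for all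
parameter tuples `g = (b, a, v, R)`. -/
theorem statement12
    (m : ℝ) (hm : 0 < m) (u u' : ℝ) (huu' : u ≠ u') :
    ¬ ∃ (U : HH ≃ₗᵢ[ℂ] HH) (φ : GalileiParam → ℂ),
        Continuous φ ∧ (∀ g : GalileiParam, ‖φ g‖ = 1) ∧
        ∀ (g : GalileiParam) (Su Su' S0 : Hsp →L[ℂ] Hsp),
          Represents m u g.1 g.2.1 g.2.2.1 (g.2.2.2 : Matrix (Fin 3) (Fin 3) ℝ) Su →
          Represents m u' g.1 g.2.1 g.2.2.1 (g.2.2.2 : Matrix (Fin 3) (Fin 3) ℝ) Su' →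
          Represents m 0 g.1 g.2.1 g.2.2.1 (g.2.2.2 : Matrix (Fin 3) (Fin 3) ℝ) S0 →
          ∀ ψ : HH, U (dsum Su Su' (U.symm ψ)) = φ g • dsum S0 S0 ψ := by
  rintro ⟨U, φ, -, -, hmain⟩
  set X : HH := (WithLp.equiv 2 (Hsp × Hsp)).symm (xg, 0) with hX
  set X' : HH := (WithLp.equiv 2 (Hsp × Hsp)).symm (0, xg) with hX'
  set Y1 : Hsp := ((WithLp.equiv 2 (Hsp × Hsp)) (U X)).1 with hY1
  set Y2 : Hsp := ((WithLp.equiv 2 (Hsp × Hsp)) (U X)).2 with hY2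
  set Z1 : Hsp := ((WithLp.equiv 2 (Hsp × Hsp)) (U X')).1 with hZ1
  set Z2 : Hsp := ((WithLp.equiv 2 (Hsp × Hsp)) (U X')).2 with hZ2
  set ρ : E3 → ℝ := fun p => ‖Y1 p‖ ^ 2 + ‖Y2 p‖ ^ 2 + (‖Z1 p‖ ^ 2 + ‖Z2 p‖ ^ 2) with hρ
  have hρint : Integrable ρ volume :=
    ((integ_sq Y1).add (integ_sq Y2)).add ((integ_sq Z1).add (integ_sq Z2))
  have key : ∀ (b : ℝ) (a : E3),
      ph u b * Tgauss m b a
        = φ (b, a, 0, 1) * ((∫ p : E3, wFun m 0 b a p * ((‖Y1 p‖ ^ 2 : ℝ) : ℂ))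
            + ∫ p : E3, wFun m 0 b a p * ((‖Y2 p‖ ^ 2 : ℝ) : ℂ))
      ∧ ph u' b * Tgauss m b a
        = φ (b, a, 0, 1) * ((∫ p : E3, wFun m 0 b a p * ((‖Z1 p‖ ^ 2 : ℝ) : ℂ))
            + ∫ p : E3, wFun m 0 b a p * ((‖Z2 p‖ ^ 2 : ℝ) : ℂ)) := by
    intro b a
    have h1 := hmain ((b, a, 0, 1) : GalileiParam) (DopOp m u b a) (DopOp m u' b a)
      (DopOp m 0 b a) (DopOp_represents m u b a) (DopOp_represents m u' b a)
      (DopOp_represents m 0 b a)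
    constructor
    · have h2 := h1 (U X)
      rw [U.symm_apply_apply] at h2
      have h3 := congrArg (fun t : HH => (inner ℂ (U X) t : ℂ)) h2
      simp only [inner_smul_right] at h3
      rw [LinearIsometryEquiv.inner_map_map, inner_dsum_eq, inner_dsum_eq, ← hY1, ← hY2] at h3
      rw [hX, Equiv.apply_symm_apply] at h3
      rw [show ((xg, (0 : Hsp)) : Hsp × Hsp).1 = xg from rfl,
        show ((xg, (0 : Hsp)) : Hsp × Hsp).2 = (0 : Hsp) from rfl, map_zero, inner_zero_right,
        add_zero, inner_DopOp_xg, inner_DopOp0, inner_DopOp0] at h3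
      exact h3
    · have h2 := h1 (U X')
      rw [U.symm_apply_apply] at h2
      have h3 := congrArg (fun t : HH => (inner ℂ (U X') t : ℂ)) h2
      simp only [inner_smul_right] at h3
      rw [LinearIsometryEquiv.inner_map_map, inner_dsum_eq, inner_dsum_eq, ← hZ1, ← hZ2] at h3
      rw [hX', Equiv.apply_symm_apply] at h3
      rw [show (((0 : Hsp), xg) : Hsp × Hsp).1 = (0 : Hsp) from rfl,
        show (((0 : Hsp), xg) : Hsp × Hsp).2 = xg from rfl, map_zero, inner_zero_right,
        zero_add, inner_DopOp_xg, inner_DopOp0, inner_DopOp0] at h3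
      exact h3
  -- the special value of b
  set b0 : ℝ := Real.pi / (u - u') with hb0
  have hne : u - u' ≠ 0 := sub_ne_zero.mpr huu'
  have hphi : ph u b0 = -ph u' b0 := by
    have hub : u * b0 = u' * b0 + π := by
      rw [hb0]
      field_simp
      ring
    rw [ph, ph, hub, ← neg_one_mul, ← Complex.exp_pi_mul_I, ← Complex.exp_add]
    congr 1
    push_cast
    ring
  -- the vanishing of the transform of ρ
  have hTzero : ∀ a : E3, (∫ p : E3, wFun m 0 b0 a p * ((ρ p : ℝ) : ℂ)) = 0 := by
    intro a
    obtain ⟨k1, k2⟩ := key b0 a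
    set G : ℂ := Tgauss m b0 a with hG
    set TY : ℂ := (∫ p : E3, wFun m 0 b0 a p * ((‖Y1 p‖ ^ 2 : ℝ) : ℂ))
      + ∫ p : E3, wFun m 0 b0 a p * ((‖Y2 p‖ ^ 2 : ℝ) : ℂ) with hTY
    set TZ : ℂ := (∫ p : E3, wFun m 0 b0 a p * ((‖Z1 p‖ ^ 2 : ℝ) : ℂ))
      + ∫ p : E3, wFun m 0 b0 a p * ((‖Z2 p‖ ^ 2 : ℝ) : ℂ) with hTZ
    have e1 : G * (ph u b0 * TZ) = G * (ph u' b0 * TY) := by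
      have c1 : (ph u b0 * G) * TZ = (φ (b0, a, 0, 1) * TY) * TZ := by rw [k1]
      have c2 : (ph u' b0 * G) * TY = (φ (b0, a, 0, 1) * TZ) * TY := by rw [k2]
      linear_combination c1 - c2
    have e2 := mul_left_cancel₀ (Tgauss_ne_zero m b0 a) e1
    rw [hphi] at e2
    have e3 : ph u' b0 * (TY + TZ) = ph u' b0 * 0 := by linear_combination -e2
    have e4 := mul_left_cancel₀ (ph_ne_zero u' b0) e3
    -- now identify the integral of ρ with TY + TZ
    have isum : (∫ p : E3, wFun m 0 b0 a p * ((ρ p : ℝ) : ℂ)) = TY + TZ := by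
      have hfun : (fun p : E3 => wFun m 0 b0 a p * ((ρ p : ℝ) : ℂ))
          = ((fun p : E3 => wFun m 0 b0 a p * ((‖Y1 p‖ ^ 2 : ℝ) : ℂ))
              + fun p : E3 => wFun m 0 b0 a p * ((‖Y2 p‖ ^ 2 : ℝ) : ℂ))
            + ((fun p : E3 => wFun m 0 b0 a p * ((‖Z1 p‖ ^ 2 : ℝ) : ℂ))
              + fun p : E3 => wFun m 0 b0 a p * ((‖Z2 p‖ ^ 2 : ℝ) : ℂ)) := by
        funext p
        simp only [Pi.add_apply]
        rw [hρ]
        push_cast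
        ring
      rw [hfun,
        integral_add' ((integ_w m b0 a (integ_sq Y1)).add (integ_w m b0 a (integ_sq Y2)))
          ((integ_w m b0 a (integ_sq Z1)).add (integ_w m b0 a (integ_sq Z2))),
        integral_add' (integ_w m b0 a (integ_sq Y1)) (integ_w m b0 a (integ_sq Y2)),
        integral_add' (integ_w m b0 a (integ_sq Z1)) (integ_w m b0 a (integ_sq Z2))]
    exact isum.trans e4
  -- Fourier injectivity
  have hae := fourier_inj (f := fun p : E3 => wFun m 0 b0 0 p * ((ρ p : ℝ) : ℂ))
    (integ_w m b0 0 hρint) ?_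
  swap
  · intro a
    rw [← hTzero a]
    apply integral_congr_ae
    filter_upwards with p
    rw [wFun_add_a m b0 a p]
    ring
  have hρ0 : ∀ᵐ p : E3 ∂volume, ρ p = 0 := by
    filter_upwards [hae] with p hp
    rcases mul_eq_zero.mp hp with h | h
    · exact absurd h (wFun_ne_zero m 0 b0 0 p)
    · exact_mod_cast h
  have hY1z : Y1 = 0 := by
    rw [Lp.eq_zero_iff_ae_eq_zero]
    filter_upwards [hρ0] with p hp
    have h1 : (0 : ℝ) ≤ ‖Y1 p‖ ^ 2 := sq_nonneg _
    have h2 : (0 : ℝ) ≤ ‖Y2 p‖ ^ 2 := sq_nonneg _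
    have h3 : (0 : ℝ) ≤ ‖Z1 p‖ ^ 2 := sq_nonneg _
    have h4 : (0 : ℝ) ≤ ‖Z2 p‖ ^ 2 := sq_nonneg _
    have hp' : ‖Y1 p‖ ^ 2 + ‖Y2 p‖ ^ 2 + (‖Z1 p‖ ^ 2 + ‖Z2 p‖ ^ 2) = 0 := hp
    have h5 : ‖Y1 p‖ ^ 2 = 0 := by nlinarith
    have h6 : ‖Y1 p‖ = 0 := by nlinarith [sq_nonneg (‖Y1 p‖)]
    simpa using h6
  have hY2z : Y2 = 0 := by
    rw [Lp.eq_zero_iff_ae_eq_zero]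
    filter_upwards [hρ0] with p hp
    have h1 : (0 : ℝ) ≤ ‖Y1 p‖ ^ 2 := sq_nonneg _
    have h2 : (0 : ℝ) ≤ ‖Y2 p‖ ^ 2 := sq_nonneg _
    have h3 : (0 : ℝ) ≤ ‖Z1 p‖ ^ 2 := sq_nonneg _
    have h4 : (0 : ℝ) ≤ ‖Z2 p‖ ^ 2 := sq_nonneg _
    have hp' : ‖Y1 p‖ ^ 2 + ‖Y2 p‖ ^ 2 + (‖Z1 p‖ ^ 2 + ‖Z2 p‖ ^ 2) = 0 := hp
    have h5 : ‖Y2 p‖ ^ 2 = 0 := by nlinarith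
    have h6 : ‖Y2 p‖ = 0 := by nlinarith [sq_nonneg (‖Y2 p‖)]
    simpa using h6
  have hUX : U X = 0 := by
    have hpair : (WithLp.equiv 2 (Hsp × Hsp)) (U X) = ((0 : Hsp), (0 : Hsp)) :=
      Prod.ext (hY1.symm.trans hY1z) (hY2.symm.trans hY2z)
    calc U X = (WithLp.equiv 2 (Hsp × Hsp)).symm ((WithLp.equiv 2 (Hsp × Hsp)) (U X)) :=
          (Equiv.symm_apply_apply _ _).symm
      _ = (WithLp.equiv 2 (Hsp × Hsp)).symm ((0 : Hsp), (0 : Hsp)) := by rw [hpair]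
      _ = 0 := rfl
  have hX0 : X = 0 := by
    have h := congrArg U.symm hUX
    rwa [LinearIsometryEquiv.symm_apply_apply, map_zero] at h
  have hxg : xg = 0 := by
    calc xg = (((WithLp.equiv 2 (Hsp × Hsp)) X).1 : Hsp) := by rw [hX, Equiv.apply_symm_apply]
      _ = ((WithLp.equiv 2 (Hsp × Hsp)) (0 : HH)).1 := by rw [hX0]
      _ = 0 := rfl
  exact xg_ne_zero hxg

end
end
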